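/- Let R be a (not necessarily commutative) ring and n : ℕ. A function φ : (Fin n → R) → R preserves left R-affine combinations — i.e. for every j : ℕ, every a : Fin j → R with ∑ k, a k = 1, and every family x : Fin j → (Fin n → R) one has φ (fun i => ∑ k, a k * x k i) = ∑ k, a k * φ (x k) — if and only if there exist u₀ : R and u : Fin n → R with φ x = u₀ + ∑ i, x i * u i for all x; moreover such a pair (u₀, u) is unique. -/
import Mathlib


/-- For a ring `R`, a function `φ : R^n → R` preserves left `R`-affine combinations
iff it is of the form `x ↦ u₀ + ∑ i, x i * u i`; moreover such a representing pair
`(u₀, u)` is unique. -/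
theorem stmt0 {R : Type*} [Ring R] (n : ℕ) (φ : (Fin n → R) → R) :
    ((∀ (j : ℕ) (a : Fin j → R), (∑ k, a k) = 1 →
        ∀ x : Fin j → (Fin n → R),
          φ (fun i => ∑ k, a k * x k i) = ∑ k, a k * φ (x k)) ↔
      ∃ (u₀ : R) (u : Fin n → R), ∀ x, φ x = u₀ + ∑ i, x i * u i) ∧
    (∀ (u₀ : R) (u : Fin n → R) (u₀' : R) (u' : Fin n → R),
      (∀ x, φ x = u₀ + ∑ i, x i * u i) →
      (∀ x, φ x = u₀' + ∑ i, x i * u' i) →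
      u₀ = u₀' ∧ u = u') := by
  constructor
  · constructor
    · intro h
      refine ⟨φ 0, fun i => φ (Pi.single i 1) - φ 0, fun x => ?_⟩
      have ha : (∑ k : Fin (n+1), (Fin.snoc x (1 - ∑ i, x i) : Fin (n+1) → R) k) = 1 := by
        rw [Fin.sum_univ_castSucc]
        simp
      have := h (n+1) _ ha
        (Fin.snoc (fun k => Pi.single k 1) 0 : Fin (n+1) → (Fin n → R))
      have harg : (fun i => ∑ k : Fin (n+1),
          (Fin.snoc x (1 - ∑ i, x i) : Fin (n+1) → R) k *
            (Fin.snoc (fun k => Pi.single k 1) 0 : Fin (n+1) → (Fin n → R)) k i) = x := by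
        funext i
        rw [Fin.sum_univ_castSucc]
        simp [Pi.single_apply]
      rw [harg] at this
      rw [this, Fin.sum_univ_castSucc]
      simp [mul_sub, sub_mul, Finset.sum_sub_distrib, Finset.sum_mul]
      abel
    · rintro ⟨u₀, u, hu⟩ j a ha x
      simp only [hu, mul_add, Finset.mul_sum, Finset.sum_mul, Finset.sum_add_distrib]
      have h1 : ∑ k, a k * u₀ = u₀ := by rw [← Finset.sum_mul, ha, one_mul]
      rw [h1, Finset.sum_comm]
      congr 1
      simp [mul_assoc]
  · intro u₀ u u₀' u' h h'
    have h0 : u₀ = u₀' := by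
      have := (h 0).symm.trans (h' 0)
      simpa using this
    refine ⟨h0, funext fun i => ?_⟩
    have := (h (Pi.single i 1)).symm.trans (h' (Pi.single i 1))
    simp [Pi.single_apply, h0] at this
    simpa [h0] using this
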